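/- Let 1 < g₀ < g₁, set δ := (g₁ − g₀)/3 > 0 and s_k := 2^{2^k} for k ∈ ℕ₀, and define g(s) := s^{g₀−1+δ} for 0 < s < 2, g(s) := s_{2k+1}^{−δ}·s^{g₁−1} for s_{2k} ≤ s < s_{2k+1}, and g(s) := s_{2k+2}^{δ}·s^{g₀−1} for s_{2k+1} ≤ s < s_{2k+2} (k ∈ ℕ₀). Then g is continuous and locally Lipschitz on (0, ∞), and at every point s > 0 where g is differentiable it satisfies g₀ − 1 ≤ s·g′(s)/g(s) ≤ g₁ − 1. -/

import Mathlib

/-- `s_k = 2^{2^k}`. -/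
noncomputable def skSeq (k : ℕ) : ℝ := (2 : ℝ) ^ (2 ^ k : ℕ)

/-- The concrete oscillating example: with `δ = (g₁ − g₀)/3`,
`g(s) = s^{g₀−1+δ}` for `0 < s < 2`, `g(s) = s_{2k+1}^{−δ} s^{g₁−1}` for `s_{2k} ≤ s < s_{2k+1}`
and `g(s) = s_{2k+2}^{δ} s^{g₀−1}` for `s_{2k+1} ≤ s < s_{2k+2}`.  (For `s ≥ 2` the index
`⌊log₂ log₂ s⌋` is the unique `j` with `s_j ≤ s < s_{j+1}`.) -/
noncomputable def gEx (g₀ g₁ : ℝ) (s : ℝ) : ℝ :=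
  if s < 2 then s ^ (g₀ - 1 + (g₁ - g₀) / 3)
  else if Nat.floor (Real.logb 2 (Real.logb 2 s)) % 2 = 0 then
    skSeq (Nat.floor (Real.logb 2 (Real.logb 2 s)) + 1) ^ (-((g₁ - g₀) / 3)) * s ^ (g₁ - 1)
  else
    skSeq (Nat.floor (Real.logb 2 (Real.logb 2 s)) + 1) ^ ((g₁ - g₀) / 3) * s ^ (g₀ - 1)

open Real Set

namespace Stmt17

lemma skSeq_pos (k : ℕ) : 0 < skSeq k := by unfold skSeq; positivity
lemma two_le_skSeq (k : ℕ) : 2 ≤ skSeq k := by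
  have : (2:ℝ)^(1:ℕ) ≤ 2^(2^k : ℕ) := by
    apply pow_le_pow_right₀ one_le_two
    exact Nat.one_le_two_pow
  simpa [skSeq] using this
lemma skSeq_lt_succ (k : ℕ) : skSeq k < skSeq (k+1) := by
  apply pow_lt_pow_right₀ one_lt_two
  exact Nat.pow_lt_pow_right one_lt_two (Nat.lt_succ_self k)
lemma skSeq_succ (k : ℕ) : skSeq (k+1) = skSeq k ^ (2:ℕ) := by
  rw [skSeq, skSeq, ← pow_mul, pow_succ]
lemma logb_skSeq (k : ℕ) : Real.logb 2 (skSeq k) = (2^k : ℕ) := by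
  rw [skSeq, ← Real.rpow_natCast 2 (2^k), Real.logb_rpow (by norm_num) (by norm_num)]

noncomputable def pc (g₀ g₁ : ℝ) (j : ℕ) : ℝ := if j % 2 = 0 then g₁ - 1 else g₀ - 1
noncomputable def cc (g₀ g₁ : ℝ) (j : ℕ) : ℝ :=
  skSeq (j+1) ^ (if j % 2 = 0 then -((g₁ - g₀) / 3) else (g₁ - g₀) / 3)

lemma cc_pos (g₀ g₁ : ℝ) (j : ℕ) : 0 < cc g₀ g₁ j :=
  Real.rpow_pos_of_pos (skSeq_pos _) _

lemma floor_log_eq {j : ℕ} {s : ℝ} (h1 : skSeq j ≤ s) (h2 : s < skSeq (j+1)) :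
    Nat.floor (Real.logb 2 (Real.logb 2 s)) = j := by
  have hs : 0 < s := lt_of_lt_of_le (skSeq_pos j) h1
  have hb : (1:ℝ) < 2 := one_lt_two
  have hl1 : ((2^j : ℕ) : ℝ) ≤ Real.logb 2 s := by
    rw [← logb_skSeq j]
    exact Real.logb_le_logb_of_le hb (skSeq_pos j) h1
  have hl2 : Real.logb 2 s < ((2^(j+1) : ℕ) : ℝ) := by
    rw [← logb_skSeq (j+1)]
    exact Real.logb_lt_logb hb hs h2
  have hp1 : (0:ℝ) < (2^j : ℕ) := by positivity
  have hl0 : (0:ℝ) < Real.logb 2 s := lt_of_lt_of_le hp1 hl1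
  have hm1 : (j:ℝ) ≤ Real.logb 2 (Real.logb 2 s) := by
    have : Real.logb 2 ((2^j : ℕ):ℝ) ≤ Real.logb 2 (Real.logb 2 s) :=
      Real.logb_le_logb_of_le hb hp1 hl1
    rwa [show ((2^j : ℕ):ℝ) = (2:ℝ)^(j:ℕ) by push_cast; ring,
      ← Real.rpow_natCast 2 j, Real.logb_rpow (by norm_num) (by norm_num)] at this
  have hm2 : Real.logb 2 (Real.logb 2 s) < (j:ℝ) + 1 := by
    have : Real.logb 2 (Real.logb 2 s) < Real.logb 2 ((2^(j+1) : ℕ):ℝ) :=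
      Real.logb_lt_logb hb hl0 hl2
    rw [show ((2^(j+1) : ℕ):ℝ) = (2:ℝ)^((j:ℕ)+1) by push_cast; ring,
      ← Real.rpow_natCast 2 (j+1), Real.logb_rpow (by norm_num) (by norm_num)] at this
    push_cast at this
    linarith
  rw [Nat.floor_eq_iff (le_trans (by positivity) hm1)]
  exact ⟨hm1, by push_cast; linarith⟩

lemma gEx_eq_piece (g₀ g₁ : ℝ) {j : ℕ} {s : ℝ} (h1 : skSeq j ≤ s) (h2 : s < skSeq (j+1)) :
    gEx g₀ g₁ s = cc g₀ g₁ j * s ^ pc g₀ g₁ j := by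
  have h2s : (2:ℝ) ≤ s := le_trans (two_le_skSeq j) h1
  rw [gEx, if_neg (not_lt.2 h2s), floor_log_eq h1 h2]
  by_cases hj : j % 2 = 0 <;> simp [cc, pc, hj]


lemma rpow_sk_sq (j : ℕ) (x : ℝ) : skSeq (j+2) ^ x = skSeq (j+1) ^ (2*x) := by
  rw [skSeq_succ (j+1), ← Real.rpow_natCast (skSeq (j+1)) 2,
    ← Real.rpow_mul (skSeq_pos (j+1)).le]
  norm_num

lemma matchj (g₀ g₁ : ℝ) (j : ℕ) :
    cc g₀ g₁ j * skSeq (j+1) ^ pc g₀ g₁ j = cc g₀ g₁ (j+1) * skSeq (j+1) ^ pc g₀ g₁ (j+1) := by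
  have hS := skSeq_pos (j+1)
  by_cases hj : j % 2 = 0
  · have hj1 : (j+1) % 2 ≠ 0 := by omega
    rw [cc, cc, pc, pc, if_pos hj, if_pos hj, if_neg hj1, if_neg hj1, rpow_sk_sq,
      ← Real.rpow_add hS, ← Real.rpow_add hS]
    congr 1
    ring
  · have hj1 : (j+1) % 2 = 0 := by omega
    rw [cc, cc, pc, pc, if_neg hj, if_neg hj, if_pos hj1, if_pos hj1, rpow_sk_sq,
      ← Real.rpow_add hS, ← Real.rpow_add hS]
    congr 1
    ring

lemma skSeq_zero : skSeq 0 = 2 := by norm_num [skSeq]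
lemma skSeq_one : skSeq 1 = 4 := by norm_num [skSeq]

lemma match0 (g₀ g₁ : ℝ) : (2:ℝ) ^ (g₀ - 1 + (g₁ - g₀)/3) = cc g₀ g₁ 0 * (2:ℝ) ^ pc g₀ g₁ 0 := by
  rw [cc, pc, if_pos rfl, if_pos rfl, skSeq_one,
    show (4:ℝ) = (2:ℝ)^(2:ℕ) by norm_num, ← Real.rpow_natCast (2:ℝ) 2,
    ← Real.rpow_mul (by norm_num : (0:ℝ) ≤ 2), ← Real.rpow_add (by norm_num : (0:ℝ) < 2)]
  congr 1
  ring

lemma gEx_eq_on_Icc0 (g₀ g₁ : ℝ) {x : ℝ} (hx : x ≤ 2) :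
    gEx g₀ g₁ x = x ^ (g₀ - 1 + (g₁ - g₀)/3) := by
  rcases lt_or_eq_of_le hx with h | h
  · rw [gEx, if_pos h]
  · subst h
    rw [gEx_eq_piece g₀ g₁ (le_of_eq skSeq_zero) (by rw [skSeq_one]; norm_num), ← match0]

lemma gEx_eq_on_Icc (g₀ g₁ : ℝ) {n : ℕ} {x : ℝ} (h1 : skSeq n ≤ x) (h2 : x ≤ skSeq (n+1)) :
    gEx g₀ g₁ x = cc g₀ g₁ n * x ^ pc g₀ g₁ n := by
  rcases lt_or_eq_of_le h2 with h | h
  · exact gEx_eq_piece g₀ g₁ h1 h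
  · subst h
    rw [gEx_eq_piece g₀ g₁ le_rfl (skSeq_lt_succ (n+1)), ← matchj]

lemma exists_index {s : ℝ} (hs : 2 ≤ s) : ∃ j : ℕ, skSeq j ≤ s ∧ s < skSeq (j+1) := by
  have hs0 : (0:ℝ) < s := by linarith
  have hb2 : (1:ℝ) < 2 := one_lt_two
  have h1 : (1:ℝ) ≤ Real.logb 2 s := by
    have := Real.logb_le_logb_of_le hb2 (by norm_num : (0:ℝ) < 2) hs
    simpa using this
  have hl0 : (0:ℝ) < Real.logb 2 s := by linarith
  have h0 : 0 ≤ Real.logb 2 (Real.logb 2 s) := Real.logb_nonneg hb2 h1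
  set t := Real.logb 2 (Real.logb 2 s) with ht
  refine ⟨Nat.floor t, ?_, ?_⟩
  · have hf : ((Nat.floor t : ℕ):ℝ) ≤ t := Nat.floor_le h0
    have e1 : (2:ℝ) ^ ((Nat.floor t : ℕ):ℝ) ≤ (2:ℝ) ^ t :=
      Real.rpow_le_rpow_of_exponent_le one_le_two hf
    rw [ht, Real.rpow_logb (by norm_num) (by norm_num) hl0] at e1
    have e2 : (2:ℝ) ^ ((2:ℝ) ^ ((Nat.floor t : ℕ):ℝ)) ≤ (2:ℝ) ^ Real.logb 2 s :=
      Real.rpow_le_rpow_of_exponent_le one_le_two e1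
    rw [Real.rpow_logb (by norm_num) (by norm_num) hs0] at e2
    calc skSeq (Nat.floor t) = (2:ℝ) ^ ((2:ℝ) ^ ((Nat.floor t : ℕ):ℝ)) := by
          rw [skSeq, Real.rpow_natCast 2 (Nat.floor t), ← Real.rpow_natCast 2 (2 ^ Nat.floor t)]
          push_cast
          ring_nf
      _ ≤ s := e2
  · have hf : t < ((Nat.floor t : ℕ):ℝ) + 1 := Nat.lt_floor_add_one t
    have e1 : (2:ℝ) ^ t < (2:ℝ) ^ (((Nat.floor t : ℕ):ℝ) + 1) :=
      Real.rpow_lt_rpow_of_exponent_lt hb2 hf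
    rw [ht, Real.rpow_logb (by norm_num) (by norm_num) hl0] at e1
    have e2 : (2:ℝ) ^ Real.logb 2 s < (2:ℝ) ^ ((2:ℝ) ^ (((Nat.floor t : ℕ):ℝ) + 1)) :=
      Real.rpow_lt_rpow_of_exponent_lt hb2 e1
    rw [Real.rpow_logb (by norm_num) (by norm_num) hs0] at e2
    calc s < (2:ℝ) ^ ((2:ℝ) ^ (((Nat.floor t : ℕ):ℝ) + 1)) := e2
      _ = skSeq (Nat.floor t + 1) := by
          have h : (2:ℝ) ^ (((Nat.floor t : ℕ):ℝ) + 1) = ((2 ^ (Nat.floor t + 1) : ℕ) : ℝ) := by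
            rw [show ((Nat.floor t : ℕ):ℝ) + 1 = (((Nat.floor t + 1 : ℕ)):ℝ) by push_cast; ring,
              Real.rpow_natCast]
            push_cast
            ring
          rw [skSeq, h, Real.rpow_natCast]


lemma lip_rpow (C α u v : ℝ) (hu : 0 < u) :
    ∃ L : NNReal, LipschitzOnWith L (fun x : ℝ => C * x ^ α) (Icc u v) := by
  have hcont : ContinuousOn (fun x : ℝ => C * (α * x ^ (α - 1))) (Icc u v) := by
    refine continuousOn_const.mul (continuousOn_const.mul ?_)
    intro x hx
    exact (Real.continuousAt_rpow_const x _ (Or.inl (ne_of_gt (lt_of_lt_of_le hu hx.1)))).continuousWithinAt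
  obtain ⟨M, hM⟩ := (isCompact_Icc).exists_bound_of_continuousOn hcont
  refine ⟨M.toNNReal, (convex_Icc u v).lipschitzOnWith_of_nnnorm_hasDerivWithin_le
    (f' := fun x => C * (α * x ^ (α - 1))) ?_ ?_⟩
  · intro x hx
    have hx0 : x ≠ 0 := ne_of_gt (lt_of_lt_of_le hu hx.1)
    exact ((Real.hasDerivAt_rpow_const (Or.inl hx0)).const_mul C).hasDerivWithinAt
  · intro x hx
    rw [← NNReal.coe_le_coe, coe_nnnorm, Real.coe_toNNReal']
    exact le_trans (hM x hx) (le_max_left _ _)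

lemma lip_congr {f g : ℝ → ℝ} {L : NNReal} {s : Set ℝ} (h : LipschitzOnWith L f s)
    (he : ∀ x ∈ s, g x = f x) : LipschitzOnWith L g s := by
  intro x hx y hy
  rw [he x hx, he y hy]
  exact h hx hy

lemma lip_weaken {f : ℝ → ℝ} {L L' : NNReal} {s : Set ℝ} (h : LipschitzOnWith L f s)
    (hLL : L ≤ L') : LipschitzOnWith L' f s := fun x hx y hy =>
  le_trans (h hx hy) (mul_le_mul_left (ENNReal.coe_le_coe.2 hLL) _)

lemma lip_glue {f : ℝ → ℝ} {L : NNReal} {a b c : ℝ} (hab : a ≤ b) (hbc : b ≤ c)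
    (h1 : LipschitzOnWith L f (Icc a b)) (h2 : LipschitzOnWith L f (Icc b c)) :
    LipschitzOnWith L f (Icc a c) := by
  apply LipschitzOnWith.of_dist_le_mul
  have key : ∀ x ∈ Icc a c, ∀ y ∈ Icc a c, x ≤ y → dist (f x) (f y) ≤ L * dist x y := ?_
  · intro x hx y hy
    rcases le_total x y with hxy | hxy
    · exact key x hx y hy hxy
    · rw [dist_comm, dist_comm x y]
      exact key y hy x hx hxy
  intro x hx y hy hxy
  rcases le_or_gt y b with h | h
  · exact h1.dist_le_mul x ⟨hx.1, le_trans hxy h⟩ y ⟨hy.1, h⟩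
  rcases le_or_gt b x with h' | h'
  · exact h2.dist_le_mul x ⟨h', hx.2⟩ y ⟨le_trans h' hxy, hy.2⟩
  · have d1 := h1.dist_le_mul x ⟨hx.1, h'.le⟩ b ⟨hab, le_refl b⟩
    have d2 := h2.dist_le_mul b ⟨le_refl b, hbc⟩ y ⟨h.le, hy.2⟩
    have tri : dist (f x) (f y) ≤ dist (f x) (f b) + dist (f b) (f y) := dist_triangle _ _ _
    have hd : dist x b + dist b y = dist x y := by
      rw [Real.dist_eq, Real.dist_eq, Real.dist_eq, abs_of_nonpos (by linarith),
        abs_of_nonpos (by linarith), abs_of_nonpos (by linarith)]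
      ring
    have hmul : (L:ℝ) * dist x y = L * dist x b + L * dist b y := by
      rw [← hd]
      ring
    linarith


lemma lip_main (g₀ g₁ : ℝ) (n : ℕ) {a : ℝ} (ha : 0 < a) (ha2 : a ≤ 2) :
    ∃ L : NNReal, LipschitzOnWith L (gEx g₀ g₁) (Icc a (skSeq n)) := by
  induction n with
  | zero =>
    obtain ⟨L, hL⟩ := lip_rpow 1 (g₀ - 1 + (g₁ - g₀)/3) a 2 ha
    refine ⟨L, ?_⟩
    rw [skSeq_zero]
    exact lip_congr hL fun x hx => by rw [gEx_eq_on_Icc0 g₀ g₁ hx.2, one_mul]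
  | succ n ih =>
    obtain ⟨L1, h1⟩ := ih
    obtain ⟨L2, h2⟩ := lip_rpow (cc g₀ g₁ n) (pc g₀ g₁ n) (skSeq n) (skSeq (n+1)) (skSeq_pos n)
    have h2' : LipschitzOnWith L2 (gEx g₀ g₁) (Icc (skSeq n) (skSeq (n+1))) :=
      lip_congr h2 fun x hx => gEx_eq_on_Icc g₀ g₁ hx.1 hx.2
    refine ⟨max L1 L2, lip_glue (le_trans ha2 (two_le_skSeq n)) (skSeq_lt_succ n).le
      (lip_weaken h1 (le_max_left _ _)) (lip_weaken h2' (le_max_right _ _))⟩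

lemma le_skSeq (n : ℕ) : (n:ℝ) ≤ skSeq n := by
  have h1 : n ≤ 2^n := Nat.le_of_lt (Nat.lt_two_pow_self (n := n))
  have h2 : 2^n ≤ 2^(2^n) := Nat.le_of_lt Nat.lt_two_pow_self
  have : (n:ℝ) ≤ ((2^(2^n) : ℕ) : ℝ) := by exact_mod_cast le_trans h1 h2
  calc (n:ℝ) ≤ ((2^(2^n) : ℕ) : ℝ) := this
    _ = skSeq n := by rw [skSeq]; push_cast; ring

lemma local_right (g₀ g₁ : ℝ) (hgg : g₀ < g₁) {s : ℝ} (hs : 0 < s) :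
    ∃ C α b, 0 < C ∧ g₀ - 1 ≤ α ∧ α ≤ g₁ - 1 ∧ s < b ∧
      ∀ x ∈ Ico s b, gEx g₀ g₁ x = C * x ^ α := by
  rcases lt_or_ge s 2 with h | h
  · exact ⟨1, g₀ - 1 + (g₁ - g₀)/3, 2, one_pos, by linarith, by linarith, h,
      fun x hx => by rw [gEx, if_pos hx.2, one_mul]⟩
  · obtain ⟨j, hj1, hj2⟩ := exists_index h
    refine ⟨cc g₀ g₁ j, pc g₀ g₁ j, skSeq (j+1), cc_pos g₀ g₁ j, ?_, ?_, hj2, ?_⟩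
    · rw [pc]; split <;> linarith
    · rw [pc]; split <;> linarith
    · exact fun x hx => gEx_eq_piece g₀ g₁ (le_trans hj1 hx.1) hx.2

lemma local_left (g₀ g₁ : ℝ) {s : ℝ} (hs : 0 < s) :
    ∃ C α : ℝ, ∃ a, a < s ∧ ∀ x ∈ Ioc a s, gEx g₀ g₁ x = C * x ^ α := by
  rcases le_or_gt s 2 with h | h
  · exact ⟨1, g₀ - 1 + (g₁ - g₀)/3, 0, hs,
      fun x hx => by rw [gEx_eq_on_Icc0 g₀ g₁ (le_trans hx.2 h), one_mul]⟩
  · obtain ⟨j, hj1, hj2⟩ := exists_index h.le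
    rcases lt_or_eq_of_le hj1 with h' | h'
    · exact ⟨cc g₀ g₁ j, pc g₀ g₁ j, skSeq j, h',
        fun x hx => gEx_eq_piece g₀ g₁ hx.1.le (lt_of_le_of_lt hx.2 hj2)⟩
    · match j, h' with
      | 0, h' => rw [skSeq_zero] at h'; exact absurd h' (by linarith)
      | (i+1), h' =>
        refine ⟨cc g₀ g₁ i, pc g₀ g₁ i, skSeq i, ?_, ?_⟩
        · rw [← h']; exact skSeq_lt_succ i
        · intro x hx
          exact gEx_eq_on_Icc g₀ g₁ hx.1.le (h' ▸ hx.2)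

end Stmt17

/-- The concrete example `gEx` is continuous and locally Lipschitz on `(0,∞)`, and at every
point of differentiability it satisfies `g₀ − 1 ≤ s g'(s)/g(s) ≤ g₁ − 1`. -/
theorem stmt_17 (g₀ g₁ : ℝ) (hg₀ : 1 < g₀) (hgg : g₀ < g₁) :
    ContinuousOn (gEx g₀ g₁) (Set.Ioi 0) ∧
    (∀ K : Set ℝ, K ⊆ Set.Ioi 0 → IsCompact K →
      ∃ C : NNReal, LipschitzOnWith C (gEx g₀ g₁) K) ∧
    (∀ s : ℝ, 0 < s → DifferentiableAt ℝ (gEx g₀ g₁) s →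
      g₀ - 1 ≤ s * deriv (gEx g₀ g₁) s / gEx g₀ g₁ s ∧
      s * deriv (gEx g₀ g₁) s / gEx g₀ g₁ s ≤ g₁ - 1) := by
  refine ⟨?_, ?_, ?_⟩
  · intro s hs
    rw [Set.mem_Ioi] at hs
    apply ContinuousAt.continuousWithinAt
    obtain ⟨Cl, αl, al, hal, hle⟩ := Stmt17.local_left g₀ g₁ hs
    obtain ⟨Cr, αr, br, _, _, _, hbr, hre⟩ := Stmt17.local_right g₀ g₁ hgg hs
    have hgl : gEx g₀ g₁ s = Cl * s ^ αl := hle s ⟨hal, le_rfl⟩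
    have hgr : gEx g₀ g₁ s = Cr * s ^ αr := hre s ⟨le_rfl, hbr⟩
    have hcl : ContinuousWithinAt (gEx g₀ g₁) (Set.Iic s) s := by
      have hc : ContinuousWithinAt (fun x : ℝ => Cl * x ^ αl) (Set.Iic s) s :=
        (continuousAt_const.mul
          (Real.continuousAt_rpow_const s αl (Or.inl hs.ne'))).continuousWithinAt
      apply hc.congr_of_eventuallyEq ?_ hgl
      filter_upwards [self_mem_nhdsWithin,
        mem_nhdsWithin_of_mem_nhds (Ioi_mem_nhds hal)] with x h1 h2
      exact hle x ⟨h2, h1⟩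
    have hcr : ContinuousWithinAt (gEx g₀ g₁) (Set.Ici s) s := by
      have hc : ContinuousWithinAt (fun x : ℝ => Cr * x ^ αr) (Set.Ici s) s :=
        (continuousAt_const.mul
          (Real.continuousAt_rpow_const s αr (Or.inl hs.ne'))).continuousWithinAt
      apply hc.congr_of_eventuallyEq ?_ hgr
      filter_upwards [self_mem_nhdsWithin,
        mem_nhdsWithin_of_mem_nhds (Iio_mem_nhds hbr)] with x h1 h2
      exact hre x ⟨h1, h2⟩
    have := hcl.union hcr
    rwa [Set.Iic_union_Ici, continuousWithinAt_univ] at this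
  · intro K hK hKc
    rcases K.eq_empty_or_nonempty with rfl | hne
    · exact ⟨0, by simp⟩
    · have haK : sInf K ∈ K := hKc.sInf_mem hne
      have ha : 0 < sInf K := hK haK
      have hsub : K ⊆ Set.Icc (sInf K) (sSup K) := fun x hx =>
        ⟨csInf_le hKc.bddBelow hx, le_csSup hKc.bddAbove hx⟩
      set n := Nat.ceil (sSup K)
      have hbn : sSup K ≤ skSeq n := le_trans (Nat.le_ceil _) (Stmt17.le_skSeq n)
      obtain ⟨L, hL⟩ := Stmt17.lip_main g₀ g₁ n (show (0:ℝ) < min (sInf K) 1 from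
        lt_min ha one_pos) (le_trans (min_le_right _ 1) one_le_two)
      exact ⟨L, hL.mono (subset_trans hsub (Set.Icc_subset_Icc (min_le_left _ 1) hbn))⟩
  · intro s hs hdiff
    obtain ⟨C, α, b, hC, hα1, hα2, hsb, he⟩ := Stmt17.local_right g₀ g₁ hgg hs
    have hR : HasDerivAt (fun x : ℝ => C * x ^ α) (C * (α * s ^ (α - 1))) s :=
      (Real.hasDerivAt_rpow_const (Or.inl hs.ne')).const_mul C
    have hev : gEx g₀ g₁ =ᶠ[nhdsWithin s (Set.Ici s)] fun x : ℝ => C * x ^ α := by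
      filter_upwards [self_mem_nhdsWithin,
        mem_nhdsWithin_of_mem_nhds (Iio_mem_nhds hsb)] with x h1 h2
      exact he x ⟨h1, h2⟩
    have hgs : gEx g₀ g₁ s = C * s ^ α := he s ⟨le_rfl, hsb⟩
    have h1 : HasDerivWithinAt (gEx g₀ g₁) (C * (α * s ^ (α - 1))) (Set.Ici s) s :=
      hR.hasDerivWithinAt.congr_of_eventuallyEq hev hgs
    have h2 : HasDerivWithinAt (gEx g₀ g₁) (deriv (gEx g₀ g₁) s) (Set.Ici s) s :=
      hdiff.hasDerivAt.hasDerivWithinAt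
    have hd : deriv (gEx g₀ g₁) s = C * (α * s ^ (α - 1)) :=
      UniqueDiffWithinAt.eq_deriv _ (uniqueDiffOn_Ici s s Set.self_mem_Ici) h2 h1
    have hsα : (0:ℝ) < s ^ α := Real.rpow_pos_of_pos hs α
    have hC' : C ≠ 0 := hC.ne'
    have hs' : s ≠ 0 := hs.ne'
    have hsα' : s ^ α ≠ 0 := hsα.ne'
    have hkey : s * deriv (gEx g₀ g₁) s / gEx g₀ g₁ s = α := by
      rw [hd, hgs, Real.rpow_sub_one hs']
      field_simp
    rw [hkey]
    exact ⟨hα1, hα2⟩
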